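/- Let n > 3, let G be a finite group with Fintype.card G = n, let m i j = g i * h j be a Cayley matrix of order n, and let T be a finite set of cells with |T| ≤ n - 1. Suppose (i₂, j₂) ∈ T and there exist i₁ ≠ i₂ and j₁ ≠ j₂ such that the cells (i₁, j₁), (i₂, j₁), (i₁, j₂) are not in T, and moreover m i₂ j₁ ≠ m i₁ j₂ and m i₁ j₁ ≠ m i₂ j₂. Then there exist i₁' ≠ i₂' and j₁' ≠ j₂' such that none of the four cells (i₁', j₁'), (i₂', j₁'), (i₁', j₂'), (i₂', j₂') lies in T and m i₁' j₁' = m i₁ j₁, m i₂' j₁' = m i₂ j₁, m i₁' j₂' = m i₁ j₂, m i₂' j₂' = m i₂ j₂. -/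
import Mathlib


/-- Lemma: if a hole `(i₂, j₂)` of a partial Cayley matrix with at most `n - 1`
holes lies in a quadrangle satisfying (C1), (C2), (C3), then there is a
complete quadrangle (all four cells full) with the same four values. -/
theorem exists_complete_matching_quadrangle {n : ℕ} (hn : 3 < n)
    {G : Type*} [Group G] [Fintype G] (hcard : Fintype.card G = n)
    (g h : Fin n → G) (hg : Function.Bijective g) (hh : Function.Bijective h)
    (m : Fin n → Fin n → G) (hm : ∀ i j, m i j = g i * h j)
    (T : Finset (Fin n × Fin n)) (hT : T.card ≤ n - 1)
    (i₂ j₂ : Fin n) (hd : (i₂, j₂) ∈ T)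
    (i₁ j₁ : Fin n) (hi : i₁ ≠ i₂) (hj : j₁ ≠ j₂)
    (hb : (i₁, j₁) ∉ T) (ha : (i₂, j₁) ∉ T) (hc : (i₁, j₂) ∉ T)
    (hC3a : m i₂ j₁ ≠ m i₁ j₂) (hC3b : m i₁ j₁ ≠ m i₂ j₂) :
    ∃ i₁' i₂' j₁' j₂' : Fin n, i₁' ≠ i₂' ∧ j₁' ≠ j₂' ∧
      (i₁', j₁') ∉ T ∧ (i₂', j₁') ∉ T ∧ (i₁', j₂') ∉ T ∧ (i₂', j₂') ∉ T ∧
      m i₁' j₁' = m i₁ j₁ ∧ m i₂' j₁' = m i₂ j₁ ∧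
      m i₁' j₂' = m i₁ j₂ ∧ m i₂' j₂' = m i₂ j₂ := by
  classical
  set a := m i₂ j₁ with ha_def
  set b := m i₁ j₁ with hb_def
  set c := m i₁ j₂ with hc_def
  set d := m i₂ j₂ with hd_def
  -- pairwise distinctness of the four values
  have hab : a ≠ b := by
    simp only [ha_def, hb_def, hm]
    intro hEq
    exact hi (hg.1 (mul_right_cancel hEq)).symm
  have hbc : b ≠ c := by
    simp only [hb_def, hc_def, hm]
    intro hEq
    exact hj (hh.1 (mul_left_cancel hEq))
  have hcd : c ≠ d := by
    simp only [hc_def, hd_def, hm]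
    intro hEq
    exact hi (hg.1 (mul_right_cancel hEq))
  have had : a ≠ d := by
    simp only [ha_def, hd_def, hm]
    intro hEq
    exact hj (hh.1 (mul_left_cancel hEq))
  have hac : a ≠ c := hC3a
  have hbd : b ≠ d := hC3b
  have hd_eq : a * b⁻¹ * c = d := by
    simp only [ha_def, hb_def, hc_def, hd_def, hm]
    group
  -- the equivalences induced by g and h
  let ge := Equiv.ofBijective g hg
  let he := Equiv.ofBijective h hh
  -- the translated quadrangle associated with column j'
  let I1 : Fin n → Fin n := fun j' => ge.symm (b * (h j')⁻¹)
  let I2 : Fin n → Fin n := fun j' => ge.symm (a * (h j')⁻¹)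
  let J2 : Fin n → Fin n := fun j' => he.symm (h j' * b⁻¹ * c)
  have hgI1 : ∀ j', g (I1 j') = b * (h j')⁻¹ := fun j' => ge.apply_symm_apply _
  have hgI2 : ∀ j', g (I2 j') = a * (h j')⁻¹ := fun j' => ge.apply_symm_apply _
  have hhJ2 : ∀ j', h (J2 j') = h j' * b⁻¹ * c := fun j' => he.apply_symm_apply _
  have hv1 : ∀ j', m (I1 j') j' = b := by
    intro j'; rw [hm, hgI1, inv_mul_cancel_right]
  have hv2 : ∀ j', m (I2 j') j' = a := by
    intro j'; rw [hm, hgI2, inv_mul_cancel_right]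
  have hv3 : ∀ j', m (I1 j') (J2 j') = c := by
    intro j'; rw [hm, hgI1, hhJ2]; group
  have hv4 : ∀ j', m (I2 j') (J2 j') = d := by
    intro j'; rw [hm, hgI2, hhJ2, ← hd_eq]; group
  have hJ2inj : Function.Injective J2 := by
    intro x y hxy
    have := congrArg h hxy
    rw [hhJ2, hhJ2] at this
    exact hh.1 (mul_right_cancel (mul_right_cancel this))
  -- there is an unblocked column
  have key : ∃ j' : Fin n, (I1 j', j') ∉ T ∧ (I2 j', j') ∉ T ∧
      (I1 j', J2 j') ∉ T ∧ (I2 j', J2 j') ∉ T := by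
    by_contra hcon
    push_neg at hcon
    have hsel : ∀ j' : Fin n, ∃ p : Fin n × Fin n, p ∈ T ∧
        (p = (I1 j', j') ∨ p = (I2 j', j') ∨ p = (I1 j', J2 j') ∨ p = (I2 j', J2 j')) := by
      intro j'
      by_cases h1 : (I1 j', j') ∈ T
      · exact ⟨_, h1, Or.inl rfl⟩
      by_cases h2 : (I2 j', j') ∈ T
      · exact ⟨_, h2, Or.inr (Or.inl rfl)⟩
      by_cases h3 : (I1 j', J2 j') ∈ T
      · exact ⟨_, h3, Or.inr (Or.inr (Or.inl rfl))⟩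
      · exact ⟨_, hcon j' h1 h2 h3, Or.inr (Or.inr (Or.inr rfl))⟩
    choose t ht1 ht2 using hsel
    -- t is injective: the value of the cell determines its role, and role +
    -- position determines the column
    have tinj : Function.Injective t := by
      intro x y hxy
      have hvx : m (t x).1 (t x).2 = m (t y).1 (t y).2 := by rw [hxy]
      rcases ht2 x with hx | hx | hx | hx <;> rcases ht2 y with hy | hy | hy | hy <;>
        rw [hx, hy] at hvx hxy <;>
        simp only [hv1, hv2, hv3, hv4] at hvx
      · exact (Prod.mk.injEq _ _ _ _ ▸ hxy).2
      · exact absurd hvx.symm hab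
      · exact absurd hvx hbc
      · exact absurd hvx hbd
      · exact absurd hvx hab
      · exact (Prod.mk.injEq _ _ _ _ ▸ hxy).2
      · exact absurd hvx hac
      · exact absurd hvx had
      · exact absurd hvx.symm hbc
      · exact absurd hvx.symm hac
      · exact hJ2inj (Prod.mk.injEq _ _ _ _ ▸ hxy).2
      · exact absurd hvx hcd
      · exact absurd hvx.symm hbd
      · exact absurd hvx.symm had
      · exact absurd hvx.symm hcd
      · exact hJ2inj (Prod.mk.injEq _ _ _ _ ▸ hxy).2
    have hle : Fintype.card (Fin n) ≤ T.card := by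
      have := Finset.card_le_card_of_injOn (s := Finset.univ) t (fun x _ => ht1 x) tinj.injOn
      simpa using this
    rw [Fintype.card_fin] at hle
    omega
  obtain ⟨j', k1, k2, k3, k4⟩ := key
  refine ⟨I1 j', I2 j', j', J2 j', ?_, ?_, k1, k2, k3, k4, hv1 j', hv2 j', hv3 j', hv4 j'⟩
  · intro hEq
    have := congrArg g hEq
    rw [hgI1, hgI2] at this
    exact hab (mul_right_cancel this).symm
  · intro hEq
    have h1 := congrArg h hEq
    rw [hhJ2, mul_assoc] at h1
    have h2 : h j' * (b⁻¹ * c) = h j' * 1 := by rw [mul_one]; exact h1.symm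
    exact hbc (inv_mul_eq_one.mp (mul_left_cancel h2))
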